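/- arXiv:0804.1597 — 2 statements merged into one kernel-verified Lean document; each statement's English description precedes it below -/
import Mathlib

section
/- If S is a shift-invariant subspace of L²(ℝ) that is invariant under translation by some irrational number θ, then S is invariant under every real translation. -/
open MeasureTheory

noncomputable section

/-- The space `L²(ℝ)` of complex-valued square-integrable functions. -/
abbrev L2 := Lp ℂ 2 (volume : Measure ℝ)

/-- The translation operator `T_a f (x) = f (x - a)` on `L²(ℝ)`. -/
def Tr (a : ℝ) : L2 → L2 :=
  Lp.compMeasurePreserving (fun x => x - a) (measurePreserving_sub_right volume a)

lemma Tr_coeFn (a : ℝ) (f : L2) : Tr a f =ᵐ[volume] fun x => f (x - a) :=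
  Lp.coeFn_compMeasurePreserving f _

lemma Tr_add (a b : ℝ) (f : L2) : Tr (a + b) f = Tr a (Tr b f) := by
  apply Lp.ext
  have h1 := Tr_coeFn (a + b) f
  have h2 := Tr_coeFn a (Tr b f)
  have h3 : ((Tr b f : L2) : ℝ → ℂ) ∘ (fun x => x - a) =ᵐ[volume]
      (fun x => f (x - b)) ∘ (fun x => x - a) :=
    (Tr_coeFn b f).comp_tendsto
      (measurePreserving_sub_right volume a).quasiMeasurePreserving.tendsto_ae
  refine h1.trans (.trans ?_ h2.symm)
  refine .trans ?_ h3.symm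
  apply Filter.EventuallyEq.of_eq
  funext x
  simp [Function.comp, sub_sub, add_comm]

lemma Tr_continuous (f : L2) : Continuous fun y : ℝ => Tr y f := by
  have : Continuous fun y : ℝ =>
      Lp.compMeasurePreserving (μ := (volume : Measure ℝ)) (μb := (volume : Measure ℝ))
        ((⟨fun x => x - y, by fun_prop⟩ : C(ℝ, ℝ)) : ℝ → ℝ)
        (measurePreserving_sub_right volume y) f := by
    refine Continuous.compMeasurePreservingLp continuous_const ?_ _ (by norm_num)
    exact ContinuousMap.continuous_of_continuous_uncurry _ (by dsimp [Function.uncurry]; fun_prop)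
  exact this

/-- If a shift-invariant subspace `S` of `L²(ℝ)` is invariant under translation by an
irrational number `θ`, then `S` is invariant under every real translation. -/
theorem stmt3 (S : Submodule ℂ L2) (hS : IsClosed (S : Set L2))
    (hinv : ∀ f ∈ S, ∀ k : ℤ, Tr (k : ℝ) f ∈ S)
    (θ : ℝ) (hθ : Irrational θ) (hθinv : ∀ f ∈ S, Tr θ f ∈ S) :
    ∀ y : ℝ, ∀ f ∈ S, Tr y f ∈ S := by
  set A : Set ℝ := {y | ∀ f ∈ S, Tr y f ∈ S} with hA
  -- A is closed
  have hAclosed : IsClosed A := by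
    have : A = ⋂ f ∈ S, (fun y => Tr y f) ⁻¹' (S : Set L2) := by
      ext y; simp [hA, Set.mem_iInter]
    rw [this]
    exact isClosed_biInter fun g _ => hS.preimage (Tr_continuous g)
  -- A is closed under addition
  have hAadd : ∀ a ∈ A, ∀ b ∈ A, a + b ∈ A := by
    intro a ha b hb f hf
    rw [Tr_add]
    exact ha _ (hb f hf)
  have hAint : ∀ m : ℤ, (m : ℝ) ∈ A := fun m f hf => hinv f hf m
  have hAθ : θ ∈ A := fun f hf => hθinv f hf
  -- positive multiples of θ plus integers are in A
  have hD : ∀ n : ℤ, 0 < n → ∀ m : ℤ, ((n : ℝ) * θ + (m : ℝ)) ∈ A := by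
    have key : ∀ nn : ℕ, ((((nn : ℤ) + 1 : ℤ) : ℝ) * θ) ∈ A := by
      intro nn
      induction nn with
      | zero => simpa using hAθ
      | succ k ih =>
        have := hAadd _ ih θ hAθ
        convert this using 1
        push_cast; ring
    intro n hn m
    obtain ⟨nn, rfl⟩ : ∃ nn : ℕ, n = (nn : ℤ) + 1 := ⟨(n - 1).toNat, by omega⟩
    exact hAadd _ (key nn) _ (hAint m)
  -- it suffices to show every real is in the closure of D
  suffices hy : ∀ y : ℝ, y ∈ A by intro y f hf; exact hy y f hf
  -- the subgroup generated by 1 and θ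
  set G := AddSubgroup.closure ({1, θ} : Set ℝ) with hG
  have hGdense : Dense (G : Set ℝ) := by
    rcases G.dense_or_cyclic with h | ⟨a, ha⟩
    · exact h
    · exfalso
      have h1 : (1 : ℝ) ∈ G := AddSubgroup.subset_closure (by simp)
      have h2 : θ ∈ G := AddSubgroup.subset_closure (by simp)
      rw [ha, AddSubgroup.mem_closure_singleton] at h1 h2
      obtain ⟨p, hp⟩ := h1
      obtain ⟨q, hq⟩ := h2
      have hp0 : (p : ℝ) ≠ 0 := by
        intro h
        rw [zsmul_eq_mul, h, zero_mul] at hp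
        exact one_ne_zero hp.symm
      refine hθ ⟨(q : ℚ) / (p : ℚ), ?_⟩
      rw [zsmul_eq_mul] at hp hq
      push_cast
      rw [div_eq_iff hp0, ← hq]
      have : a = 1 / (p : ℝ) := by field_simp [← hp]; linarith [mul_comm a (p : ℝ)]
      rw [this]; field_simp
  intro y
  -- show y ∈ closure of the set D of good points, hence in A
  refine closure_minimal (s := {x : ℝ | ∃ n : ℤ, 0 < n ∧ ∃ m : ℤ, x = (n : ℝ) * θ + m})
    ?_ hAclosed ?_
  · rintro x ⟨n, hn, m, rfl⟩; exact hD n hn m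
  · rw [Metric.mem_closure_iff]
    intro ε hε
    set ε' := min ε 1 with hε'
    have hε'0 : 0 < ε' := lt_min hε one_pos
    have hε'1 : ε' ≤ 1 := min_le_right _ _
    -- find an element of G in (0, ε')
    obtain ⟨g, hgG, hg0, hgε⟩ : ∃ g ∈ G, 0 < g ∧ g < ε' := by
      obtain ⟨g, hgG, hg⟩ := hGdense.exists_mem_open isOpen_Ioo
        (Set.nonempty_Ioo.2 hε'0)
      exact ⟨g, hgG, hg.1, hg.2⟩
    rw [hG, AddSubgroup.mem_closure_pair] at hgG
    obtain ⟨mm, nn, hmn⟩ := hgG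
    rw [zsmul_eq_mul, zsmul_eq_mul, mul_one] at hmn
    -- nn ≠ 0
    have hnn : nn ≠ 0 := by
      rintro rfl
      rw [Int.cast_zero, zero_mul, add_zero] at hmn
      subst hmn
      have hmm1 : (1 : ℤ) ≤ mm := by exact_mod_cast hg0
      have : (1 : ℝ) ≤ (mm : ℝ) := by exact_mod_cast hmm1
      linarith [lt_of_lt_of_le hgε hε'1]
    -- get δ = N θ + M with N > 0, 0 < |δ| < ε'
    obtain ⟨δ, N, M, hN, hδeq, hδ0, hδε⟩ :
        ∃ (δ : ℝ) (N M : ℤ), 0 < N ∧ δ = (N : ℝ) * θ + M ∧ δ ≠ 0 ∧ |δ| < ε' := by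
      rcases hnn.lt_or_gt with h | h
      · exact ⟨-g, -nn, -mm, by omega, by push_cast; linarith [hmn], by linarith,
          by rw [abs_of_nonpos (by linarith)]; linarith⟩
      · exact ⟨g, nn, mm, h, by linarith [hmn], by linarith,
          by rw [abs_of_pos hg0]; linarith⟩
    -- choose an integer shift c so that (y - c)/δ ≥ 1
    obtain ⟨c, hc⟩ : ∃ c : ℤ, 1 ≤ (y - c) / δ := by
      rcases hδ0.lt_or_gt with h | h
      · refine ⟨⌈y - δ⌉, ?_⟩
        rw [le_div_iff_of_neg h]
        have := Int.le_ceil (y - δ)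
        linarith
      · refine ⟨⌊y - δ⌋, ?_⟩
        rw [le_div_iff₀ h]
        have := Int.floor_le (y - δ)
        linarith
    set r := (y - c) / δ with hr
    set k := ⌊r⌋ with hk
    have hk1 : 1 ≤ k := Int.le_floor.2 (by exact_mod_cast hc)
    have hkr : (k : ℝ) ≤ r := Int.floor_le r
    have hrk : r < k + 1 := Int.lt_floor_add_one r
    have hyc : y - c = r * δ := by rw [hr]; field_simp
    refine ⟨(k * N : ℝ) * θ + (k * M + c : ℤ), ⟨k * N, by positivity, k * M + c, by push_cast; ring⟩, ?_⟩
    rw [Real.dist_eq]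
    have heq : y - ((k * N : ℝ) * θ + (k * M + c : ℤ)) = (r - k) * δ := by
      push_cast
      have : (k : ℝ) * ((N : ℝ) * θ + M) = (k * N : ℝ) * θ + (k * M : ℝ) := by ring
      nlinarith [hyc, hδeq]
    rw [heq, abs_mul]
    calc |r - (k : ℝ)| * |δ| ≤ 1 * |δ| := by
          apply mul_le_mul_of_nonneg_right _ (abs_nonneg _)
          rw [abs_le]; constructor <;> linarith
      _ < ε' := by rw [one_mul]; exact hδε
      _ ≤ ε := min_le_left _ _
end
end

section
/- Let S be a shift-invariant subspace of L²(ℝ) with invariance order n (i.e., n is the maximal positive integer such that S is (1/n)ℤ-invariant). If S is invariant under translation by a real number y ≥ 1/n, then y is an integer multiple of 1/d for some divisor d of n. -/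
open MeasureTheory

noncomputable section

lemma Tr_coe (a : ℝ) (f : L2) : (Tr a f : ℝ → ℂ) =ᵐ[volume] fun x => f (x - a) :=
  Lp.coeFn_compMeasurePreserving f _

lemma Tr_Tr (a b : ℝ) (f : L2) : Tr a (Tr b f) = Tr (a + b) f := by
  apply Lp.ext
  have h1 := Tr_coe a (Tr b f)
  have h2 := Tr_coe (a + b) f
  have h3 : (fun x : ℝ => (Tr b f : ℝ → ℂ) (x - a)) =ᵐ[volume]
      fun x => f ((x - a) - b) :=
    (measurePreserving_sub_right volume a).quasiMeasurePreserving.ae_eq_comp (Tr_coe b f)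
  refine (h1.trans (h3.trans ?_)).trans h2.symm
  filter_upwards with x
  ring_nf

lemma Tr_cont (f : L2) : Continuous fun a : ℝ => Tr a f := by
  have hc : Continuous fun a : ℝ => (ContinuousMap.id ℝ - ContinuousMap.const ℝ a) :=
    continuous_const.sub (ContinuousMap.continuous_const')
  exact Continuous.compMeasurePreservingLp (f := fun _ : ℝ => f)
    (g := fun a : ℝ => ContinuousMap.id ℝ - ContinuousMap.const ℝ a)
    continuous_const hc (fun a => measurePreserving_sub_right volume a) (by norm_num)

/-- Approximation by nonnegative multiples of a nonzero step, modulo 1. -/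
lemma step_approx (δ t : ℝ) (hδ : δ ≠ 0) : ∃ (m : ℕ) (K : ℤ), |m * δ + K - t| ≤ |δ| := by
  rcases hδ.lt_or_gt with h | h
  · -- δ < 0
    set c : ℤ := ⌈t⌉
    have hq : 0 ≤ (t - c) / δ := div_nonneg_of_nonpos (by simp [c, Int.le_ceil]) h.le
    set q : ℝ := (t - c) / δ
    refine ⟨⌈q⌉.toNat, c, ?_⟩
    have hm : (⌈q⌉.toNat : ℝ) = (⌈q⌉ : ℝ) := by
      norm_cast; exact Int.toNat_of_nonneg (by exact_mod_cast Int.ceil_nonneg (by exact_mod_cast hq))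
    rw [hm, abs_le]
    have h1 : q ≤ (⌈q⌉ : ℝ) := Int.le_ceil q
    have h2 : (⌈q⌉ : ℝ) < q + 1 := Int.ceil_lt_add_one q
    have e1 : (⌈q⌉ : ℝ) * δ ≤ t - c := by
      have := mul_le_mul_of_nonpos_right h1 h.le
      calc (⌈q⌉:ℝ) * δ ≤ q * δ := this
        _ = t - c := by simp only [q]; exact div_mul_cancel₀ _ h.ne

    have e2 : t - c + δ ≤ (⌈q⌉ : ℝ) * δ := by
      have := mul_le_mul_of_nonpos_right h2.le h.le
      calc t - c + δ = (q + 1) * δ := by simp only [q]; rw [add_mul, div_mul_cancel₀ _ h.ne, one_mul]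
        _ ≤ (⌈q⌉:ℝ) * δ := this
    constructor
    · rw [abs_of_neg h]; linarith
    · rw [abs_of_neg h]; linarith
  · -- δ > 0
    set c : ℤ := ⌊t⌋
    have hq : 0 ≤ (t - c) / δ := div_nonneg (by simp [c, Int.floor_le]) h.le
    set q : ℝ := (t - c) / δ
    refine ⟨⌈q⌉.toNat, c, ?_⟩
    have hm : (⌈q⌉.toNat : ℝ) = (⌈q⌉ : ℝ) := by
      norm_cast; exact Int.toNat_of_nonneg (by exact_mod_cast Int.ceil_nonneg (by exact_mod_cast hq))
    rw [hm, abs_le]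
    have h1 : q ≤ (⌈q⌉ : ℝ) := Int.le_ceil q
    have h2 : (⌈q⌉ : ℝ) < q + 1 := Int.ceil_lt_add_one q
    have e1 : t - c ≤ (⌈q⌉ : ℝ) * δ := by
      calc t - c = q * δ := by simp only [q]; exact (div_mul_cancel₀ _ h.ne').symm
        _ ≤ (⌈q⌉:ℝ) * δ := mul_le_mul_of_nonneg_right h1 h.le
    have e2 : (⌈q⌉ : ℝ) * δ ≤ t - c + δ := by
      calc (⌈q⌉:ℝ) * δ ≤ (q+1) * δ := mul_le_mul_of_nonneg_right h2.le h.le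
        _ = t - c + δ := by simp only [q]; rw [add_mul, div_mul_cancel₀ _ h.ne', one_mul]
    constructor
    · rw [abs_of_pos h]; linarith
    · rw [abs_of_pos h]; linarith

/-- If `S` is a shift-invariant subspace of `L²(ℝ)` with invariance order `n`, and `S` is
invariant under translation by some `y ≥ 1/n`, then `y` is an integer multiple of `1/d`
for some divisor `d` of `n`. -/
theorem stmt4 (S : Submodule ℂ L2) (hS : IsClosed (S : Set L2))
    (hinv : ∀ f ∈ S, ∀ k : ℤ, Tr (k : ℝ) f ∈ S)
    (n : ℕ) (hn : 0 < n)
    (hninv : ∀ f ∈ S, ∀ j : ℤ, Tr ((j : ℝ) / n) f ∈ S)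
    (hmax : ∀ m : ℕ, 0 < m → (∀ f ∈ S, ∀ j : ℤ, Tr ((j : ℝ) / m) f ∈ S) → m ≤ n)
    (y : ℝ) (hy : (1 : ℝ) / n ≤ y) (hyinv : ∀ f ∈ S, Tr y f ∈ S) :
    ∃ d : ℕ, d ∣ n ∧ 0 < d ∧ ∃ k : ℤ, y = (k : ℝ) / d := by
  -- S is invariant under translation by m*y + c for all m : ℕ, c : ℤ
  have hNy : ∀ (m : ℕ) (c : ℤ), ∀ f ∈ S, Tr ((m : ℝ) * y + (c : ℝ)) f ∈ S := by
    intro m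
    induction m with
    | zero => intro c f hf; simpa using hinv f hf c
    | succ m ih =>
      intro c f hf
      have : Tr y (Tr ((m : ℝ) * y + (c : ℝ)) f) ∈ S := hyinv _ (ih c f hf)
      rw [Tr_Tr] at this
      convert this using 2
      push_cast; ring
  by_cases hrat : ∃ r : ℚ, (r : ℝ) = y
  · -- rational case
    obtain ⟨r, hr⟩ := hrat
    set p : ℤ := r.num
    set q : ℕ := r.den
    have hq0 : 0 < q := r.pos
    have hy' : y = (p : ℝ) / q := by rw [← hr, Rat.cast_def]
    -- Bezout for p, q
    have hcop : IsCoprime p (q : ℤ) := by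
      rw [Int.isCoprime_iff_gcd_eq_one]
      simpa [Int.gcd] using r.reduced
    obtain ⟨u, v, huv⟩ := hcop
    -- S is (1/q)ℤ-invariant
    have hqinv : ∀ f ∈ S, ∀ j : ℤ, Tr ((j : ℝ) / q) f ∈ S := by
      intro f hf j
      set m : ℤ := (j * u) % q with hm_def
      have hm0 : 0 ≤ m := Int.emod_nonneg _ (by exact_mod_cast hq0.ne')
      set t : ℤ := j * v + ((j * u) / q) * p with ht_def
      have e : (j * u) % q = j * u - q * ((j * u) / q) := Int.emod_def _ _
      have hint : m * p + t * q = j := by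
        rw [hm_def, ht_def, e]; linear_combination j * huv
      have key : (j : ℝ) / q = (m.toNat : ℝ) * y + (t : ℝ) := by
        have hmr : (m.toNat : ℝ) = (m : ℝ) := by exact_mod_cast Int.toNat_of_nonneg hm0
        rw [hmr, hy']
        have : (j : ℝ) = (m : ℝ) * p + t * q := by exact_mod_cast congrArg (Int.cast : ℤ → ℝ) hint.symm
        rw [this]
        field_simp
      rw [key]
      exact hNy m.toNat t f hf
    -- lcm argument: q ∣ n
    have hqn : q ∣ n := by
      set g : ℕ := Nat.gcd n q with hg_def
      set L : ℕ := Nat.lcm n q with hL_def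
      have hg0 : 0 < g := Nat.gcd_pos_of_pos_left q hn
      have hL0 : 0 < L := Nat.lcm_pos hn hq0
      obtain ⟨a, b, hab⟩ : ∃ a b : ℤ, (g : ℤ) = n * a + q * b :=
        ⟨Nat.gcdA n q, Nat.gcdB n q, Nat.gcd_eq_gcd_ab n q⟩
      have hgl : (g : ℝ) * L = n * q := by exact_mod_cast Nat.gcd_mul_lcm n q
      have hLinv : ∀ f ∈ S, ∀ j : ℤ, Tr ((j : ℝ) / L) f ∈ S := by
        intro f hf j
        have habr : (g : ℝ) = n * a + q * b := by exact_mod_cast congrArg (Int.cast : ℤ → ℝ) hab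
        have key : (j : ℝ) / L = ((j * a : ℤ) : ℝ) / q + ((j * b : ℤ) : ℝ) / n := by
          have hn0 : (n : ℝ) ≠ 0 := by positivity
          have hq0' : (q : ℝ) ≠ 0 := by positivity
          have hL0' : (L : ℝ) ≠ 0 := by positivity
          push_cast
          field_simp
          linear_combination (-(j:ℝ)) * hgl + (j:ℝ) * (L:ℝ) * habr
        rw [key, ← Tr_Tr]
        exact hqinv _ (hninv f hf (j * b)) (j * a)
      have h1 : L ≤ n := hmax L hL0 hLinv
      have h2 : n ≤ L := Nat.le_of_dvd hL0 (Nat.dvd_lcm_left n q)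
      have : L = n := le_antisymm h1 h2
      rw [← this]
      exact Nat.dvd_lcm_right n q
    exact ⟨q, hqn, hq0, p, hy'⟩
  · -- irrational case: contradiction
    exfalso
    have hD : ∀ a : ℝ, ∀ f ∈ S, Tr a f ∈ S := by
      have hdense : Dense {a : ℝ | ∃ (m : ℕ) (c : ℤ), a = (m : ℝ) * y + c} := by
        rw [Metric.dense_iff]
        intro t ε hε
        obtain ⟨N, hN⟩ := exists_nat_gt (1 / ε)
        have hN0 : 0 < N := by
          by_contra h
          push_neg at h
          interval_cases N
          · simp at hN; linarith [one_div_pos.mpr hε]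
        obtain ⟨j, k, hk0, hkN, hjk⟩ := Real.exists_int_int_abs_mul_sub_le y hN0
        set δ : ℝ := (k : ℝ) * y - j with hδ_def
        have hδne : δ ≠ 0 := by
          intro h0
          apply hrat
          refine ⟨(j : ℚ) / (k : ℚ), ?_⟩
          have hkR : (k : ℝ) ≠ 0 := by exact_mod_cast hk0.ne'
          push_cast
          field_simp
          linarith [h0, hδ_def]
        have hδε : |δ| < ε := by
          have h1 : (0:ℝ) < N + 1 := by positivity
          have : 1 / ((N:ℝ) + 1) < ε := by
            rw [div_lt_iff₀ h1]
            have : 1 / ε < (N:ℝ) := hN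
            rw [div_lt_iff₀ hε] at this
            nlinarith
          linarith [hjk]
        obtain ⟨m, K, hmK⟩ := step_approx δ t hδne
        refine ⟨(m : ℝ) * δ + K, Metric.mem_ball.2 ?_, ?_⟩
        · rw [Real.dist_eq]
          calc |(m : ℝ) * δ + K - t| ≤ |δ| := hmK
            _ < ε := hδε
        · refine ⟨(m * k.toNat), K - m * j, ?_⟩
          have hkt : ((k.toNat : ℕ) : ℝ) = (k : ℝ) := by
            exact_mod_cast Int.toNat_of_nonneg hk0.le
          rw [hδ_def]
          push_cast
          rw [hkt]
          ring
      intro a f hf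
      have hclosed : IsClosed ((fun b : ℝ => Tr b f) ⁻¹' (S : Set L2)) :=
        hS.preimage (Tr_cont f)
      have hsub : {b : ℝ | ∃ (m : ℕ) (c : ℤ), b = (m : ℝ) * y + c} ⊆
          (fun b : ℝ => Tr b f) ⁻¹' (S : Set L2) := by
        rintro b ⟨m, c, rfl⟩
        exact hNy m c f hf
      have : a ∈ closure {b : ℝ | ∃ (m : ℕ) (c : ℤ), b = (m : ℝ) * y + c} :=
        hdense a
      exact (closure_minimal hsub hclosed) this
    have := hmax (n + 1) (Nat.succ_pos n) (fun f hf j => hD _ f hf)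
    omega
end
end
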